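/- Sphere-packing bound: if C ⊆ S_{n,q} is a code with minimum deletion distance d(C) ≥ 2t+1 (i.e., any two distinct codewords are at deletion distance at least 2t+1), then |C| ≤ binomial(n+q-1, q-1) / binomial(t+q-1, q-1). -/

import Mathlib

def simplex (n q : ℕ) : Finset (Fin q → ℕ) := Finset.Nat.antidiagonalTuple q n

def delDist {q : ℕ} (x y : Fin q → ℕ) : ℕ := ∑ i, (x i - y i)

def ball (n q r : ℕ) (x : Fin q → ℕ) : Finset (Fin q → ℕ) :=
  (simplex n q).filter (fun y => delDist x y ≤ r)

lemma mem_simplex {n q : ℕ} {x : Fin q → ℕ} : x ∈ simplex n q ↔ ∑ i, x i = n :=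
  Finset.Nat.mem_antidiagonalTuple

lemma multiset_card_finset_sum {α β : Type*} (s : Finset β) (f : β → Multiset α) :
    Multiset.card (∑ i ∈ s, f i) = ∑ i ∈ s, Multiset.card (f i) := by
  classical
  induction s using Finset.cons_induction with
  | empty => simp
  | cons a s ha ih => simp [Finset.sum_cons, ih]

/-- Equivalence between the simplex and `Sym (Fin q) n`. -/
def simplexEquivSym (n q : ℕ) : {x // x ∈ simplex n q} ≃ Sym (Fin q) n where
  toFun x := ⟨∑ i, Multiset.replicate (x.1 i) i, by
    rw [multiset_card_finset_sum]
    simpa using mem_simplex.mp x.2⟩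
  invFun s := ⟨fun i => Multiset.count i s.1, by
    rw [mem_simplex, Multiset.sum_count_eq_card (fun a _ => Finset.mem_univ a)]
    exact s.2⟩
  left_inv x := by
    ext i
    simp [Multiset.count_sum', Multiset.count_replicate]
  right_inv s := by
    apply Subtype.ext
    show (∑ i : Fin q, Multiset.replicate (Multiset.count i s.1) i) = s.1
    simp only [← Multiset.nsmul_singleton]
    rw [← Finset.sum_subset (Finset.subset_univ s.1.toFinset)
      (fun i _ hi => by rw [Multiset.count_eq_zero_of_notMem (by simpa using hi), zero_smul])]
    exact Multiset.toFinset_sum_count_nsmul_eq s.1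

lemma card_simplex (n q : ℕ) (hq : 1 ≤ q) :
    (simplex n q).card = (n + q - 1).choose (q - 1) := by
  have h1 : Fintype.card {x // x ∈ simplex n q} = Fintype.card (Sym (Fin q) n) :=
    Fintype.card_congr (simplexEquivSym n q)
  rw [Fintype.card_coe] at h1
  rw [h1, Sym.card_sym_eq_choose, Fintype.card_fin]
  have h : q + n - 1 = q - 1 + n := by omega
  have h2 : n + q - 1 = q - 1 + n := by omega
  rw [h, h2]
  have := Nat.choose_symm (Nat.le_add_right (q - 1) n)
  simpa using this

lemma delDist_symm {q : ℕ} {x y : Fin q → ℕ} (h : ∑ i, x i = ∑ i, y i) :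
    delDist x y = delDist y x := by
  have key : delDist x y + ∑ i, y i = delDist y x + ∑ i, x i := by
    unfold delDist
    rw [← Finset.sum_add_distrib, ← Finset.sum_add_distrib]
    apply Finset.sum_congr rfl
    intro i _
    rcases le_total (x i) (y i) with h' | h' <;> omega
  omega

lemma delDist_triangle {q : ℕ} (x y z : Fin q → ℕ) :
    delDist x z ≤ delDist x y + delDist y z := by
  unfold delDist
  rw [← Finset.sum_add_distrib]
  exact Finset.sum_le_sum fun i _ => tsub_le_tsub_add_tsub

lemma exists_sub_tuple {q : ℕ} (x : Fin q → ℕ) (t : ℕ) (h : t ≤ ∑ i, x i) :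
    ∃ r : Fin q → ℕ, (∀ i, r i ≤ x i) ∧ ∑ i, r i = t := by
  induction t with
  | zero => exact ⟨0, fun i => Nat.zero_le _, by simp⟩
  | succ t ih =>
    obtain ⟨r, hr, hsum⟩ := ih (Nat.le_of_succ_le h)
    have : ∃ i, r i < x i := by
      by_contra hc
      push_neg at hc
      have : ∑ i, x i ≤ ∑ i, r i := Finset.sum_le_sum fun i _ => hc i
      omega
    obtain ⟨i, hi⟩ := this
    refine ⟨Function.update r i (r i + 1), fun j => ?_, ?_⟩
    · rcases eq_or_ne j i with rfl | hj
      · simpa using hi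
      · simp [Function.update_of_ne hj, hr j]
    · rw [Finset.sum_update_of_mem (Finset.mem_univ i)]
      rw [← hsum, Finset.sum_eq_add_sum_sdiff_singleton_of_mem (Finset.mem_univ i) r]
      ring

lemma ball_card_lower (n q t : ℕ) (ht : t ≤ n) (x : Fin q → ℕ) (hx : x ∈ simplex n q) :
    (simplex t q).card ≤ (ball n q t x).card := by
  have hxs := mem_simplex.mp hx
  obtain ⟨r, hr, hrsum⟩ := exists_sub_tuple x t (by omega)
  apply Finset.card_le_card_of_injOn (fun δ i => x i - r i + δ i)
  · intro δ hδ
    have hδs := mem_simplex.mp hδ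
    have hsub : ∑ i, (x i - r i) = n - t := by
      have : ∑ i, (x i - r i) + ∑ i, r i = ∑ i, x i := by
        rw [← Finset.sum_add_distrib]
        exact Finset.sum_congr rfl fun i _ => Nat.sub_add_cancel (hr i)
      omega
    rw [ball, Finset.mem_coe, Finset.mem_filter]
    beta_reduce
    constructor
    · rw [mem_simplex, Finset.sum_add_distrib, hsub, hδs]; omega
    · unfold delDist
      calc ∑ i, (x i - (x i - r i + δ i)) ≤ ∑ i, r i :=
            Finset.sum_le_sum fun i _ => by omega
        _ = t := hrsum
  · intro δ1 _ δ2 _ hEq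
    funext i
    have := congrFun hEq i
    simpa using this

/-- Sphere-packing bound: a code in `S_{n,q}` with minimum deletion distance at
least `2t+1` has size at most `binomial(n+q-1,q-1) / binomial(t+q-1,q-1)`. -/
theorem sphere_packing_bound (n q t : ℕ) (hq : 1 ≤ q) (ht : t ≤ n)
    (C : Finset (Fin q → ℕ)) (hC : C ⊆ simplex n q)
    (hdist : ∀ S ∈ C, ∀ T ∈ C, S ≠ T → 2 * t + 1 ≤ delDist S T) :
    (C.card : ℚ) ≤ ((n + q - 1).choose (q - 1) : ℚ) / ((t + q - 1).choose (q - 1) : ℚ) := by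
  set B := (t + q - 1).choose (q - 1) with hB
  have hBpos : 0 < B := Nat.choose_pos (by omega)
  -- balls are pairwise disjoint
  have hdisj : ∀ S ∈ C, ∀ T ∈ C, S ≠ T → Disjoint (ball n q t S) (ball n q t T) := by
    intro S hS T hT hST
    rw [Finset.disjoint_left]
    intro y hyS hyT
    rw [ball, Finset.mem_filter] at hyS hyT
    have hy := mem_simplex.mp hyS.1
    have hT' := mem_simplex.mp (hC hT)
    have hsym : delDist y T = delDist T y := delDist_symm (by rw [hy, hT'])
    have htri := delDist_triangle S y T
    have := hdist S hS T hT hST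
    omega
  -- counting
  have hcount : C.card * B ≤ (n + q - 1).choose (q - 1) := by
    calc C.card * B = ∑ _x ∈ C, B := by rw [Finset.sum_const, smul_eq_mul]
      _ ≤ ∑ x ∈ C, (ball n q t x).card := by
          apply Finset.sum_le_sum
          intro x hx
          rw [hB, ← card_simplex t q hq]
          exact ball_card_lower n q t ht x (hC hx)
      _ = (C.biUnion (ball n q t)).card := (Finset.card_biUnion hdisj).symm
      _ ≤ (simplex n q).card := by
          apply Finset.card_le_card
          intro y hy
          rw [Finset.mem_biUnion] at hy
          obtain ⟨x, _, hyx⟩ := hy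
          exact (Finset.mem_filter.mp hyx).1
      _ = (n + q - 1).choose (q - 1) := card_simplex n q hq
  rw [le_div_iff₀ (by exact_mod_cast hBpos)]
  exact_mod_cast hcount
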